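/- If for all sign triples σ and all edge lengths x,y,z in [0,1] satisfying the triangle inequality one has ALG^σ(x,y,z) ≤ ρ·LP^σ(x,y,z), and f^+(0) = f^-(0) = 0, then in each step t of the pivot-based LP rounding algorithm, E[ALG_t | V_t] ≤ ρ·E[LP_t | V_t], where ALG_t is the number of constraints violated at step t and LP_t is the LP weight of edges removed at step t. -/
import Mathlib


attribute [local instance] Classical.propDecidable

section
variable {V : Type*} [Fintype V] [LinearOrder V]

/-- Probability that `v` joins the cluster when `w` is the pivot:
`1 - f⁺(x_wv)` for a positive edge, `1 - f⁻(x_wv)` for a negative edge. -/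
noncomputable def joinProb (pos : V → V → Bool) (x : V → V → ℝ) (fp fm : ℝ → ℝ)
    (w v : V) : ℝ :=
  1 - (if pos w v then fp (x w v) else fm (x w v))

/-- Probability that, with pivot `w` and active set `A`, the set of vertices (other than `w`)
joining the cluster is exactly `S` (vertices join independently). -/
noncomputable def clusterProb (pos : V → V → Bool) (x : V → V → ℝ) (fp fm : ℝ → ℝ)
    (A : Finset V) (w : V) (S : Finset V) : ℝ :=
  (∏ v ∈ S, joinProb pos x fp fm w v) *
    ∏ v ∈ (A.erase w) \ S, (1 - joinProb pos x fp fm w v)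

/-- `ALG_t` for cluster `C` and active set `A`: the number of positive edges of `A` with
exactly one endpoint in `C` plus negative edges of `A` with both endpoints in `C`. -/
noncomputable def algCount (pos : V → V → Bool) (A C : Finset V) : ℕ :=
  (Finset.univ.filter (fun p : V × V => p.1 ∈ A ∧ p.2 ∈ A ∧ p.1 < p.2 ∧
    (if pos p.1 p.2 then ((p.1 ∈ C ∧ p.2 ∉ C) ∨ (p.1 ∉ C ∧ p.2 ∈ C))
      else (p.1 ∈ C ∧ p.2 ∈ C)))).card

/-- `LP_t` for cluster `C` and active set `A`: the LP weight of the edges of `A` removed at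
this step, i.e. with at least one endpoint in `C`. -/
noncomputable def lpWeight (pos : V → V → Bool) (x : V → V → ℝ) (A C : Finset V) : ℝ :=
  ∑ p ∈ Finset.univ.filter (fun p : V × V => p.1 ∈ A ∧ p.2 ∈ A ∧ p.1 < p.2 ∧
      (p.1 ∈ C ∨ p.2 ∈ C)),
    (if pos p.1 p.2 then x p.1 p.2 else 1 - x p.1 p.2)

/-- `E[ALG_t | V_t = A]`: average over the uniform pivot `w ∈ A` and the random cluster. -/
noncomputable def expALG (pos : V → V → Bool) (x : V → V → ℝ) (fp fm : ℝ → ℝ)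
    (A : Finset V) : ℝ :=
  ((A.card : ℝ))⁻¹ * ∑ w ∈ A, ∑ S ∈ (A.erase w).powerset,
    clusterProb pos x fp fm A w S * (algCount pos A (insert w S) : ℝ)

/-- `E[LP_t | V_t = A]`. -/
noncomputable def expLP (pos : V → V → Bool) (x : V → V → ℝ) (fp fm : ℝ → ℝ)
    (A : Finset V) : ℝ :=
  ((A.card : ℝ))⁻¹ * ∑ w ∈ A, ∑ S ∈ (A.erase w).powerset,
    clusterProb pos x fp fm A w S * lpWeight pos x A (insert w S)

end

/-- `ALG^σ(x,y,z)` for a triangle `(u,v,w)` with signature `σ = (s₁,s₂,s₃)`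
(`s₁` the sign of `(v,w)` of length `x`, `s₂` of `(u,w)` of length `y`, `s₃` of `(u,v)` of
length `z`; `true` = positive): the sum over the three pivots of the probability that the
opposite edge is in disagreement. -/
noncomputable def ALGsig (fp fm : ℝ → ℝ) (s1 s2 s3 : Bool) (x y z : ℝ) : ℝ :=
  let g : Bool → ℝ → ℝ := fun s t => if s then fp t else fm t
  (if s3 then g s2 y + g s1 x - 2 * g s2 y * g s1 x else (1 - g s2 y) * (1 - g s1 x)) +
  (if s2 then g s3 z + g s1 x - 2 * g s3 z * g s1 x else (1 - g s3 z) * (1 - g s1 x)) +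
  (if s1 then g s3 z + g s2 y - 2 * g s3 z * g s2 y else (1 - g s3 z) * (1 - g s2 y))

/-- `LP^σ(x,y,z)`: the sum over the three pivots of the expected removed LP weight of the
opposite edge. -/
noncomputable def LPsig (fp fm : ℝ → ℝ) (s1 s2 s3 : Bool) (x y z : ℝ) : ℝ :=
  let g : Bool → ℝ → ℝ := fun s t => if s then fp t else fm t
  (if s3 then z else 1 - z) * (1 - g s2 y * g s1 x) +
  (if s2 then y else 1 - y) * (1 - g s3 z * g s1 x) +
  (if s1 then x else 1 - x) * (1 - g s3 z * g s2 y)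


section StepAux
set_option linter.unusedSectionVars false
open Finset
variable {V : Type*} [Fintype V] [LinearOrder V]


lemma wgt_total (T : Finset V) (q : V → ℝ) :
    ∑ S ∈ T.powerset, (∏ t ∈ S, q t) * ∏ t ∈ T \ S, (1 - q t) = 1 := by
  rw [← Finset.prod_add]
  simp

lemma ind_prod (s : Finset V) (u : V) :
    (∏ t ∈ s, (if t = u then (0:ℝ) else 1)) = if u ∈ s then 0 else 1 := by
  by_cases h : u ∈ s
  · rw [if_pos h]; exact Finset.prod_eq_zero h (by simp)
  · rw [if_neg h]
    apply Finset.prod_eq_one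
    intro t ht
    rw [if_neg]
    rintro rfl; exact h ht

lemma ind_prod2 (s : Finset V) (u v : V) :
    (∏ t ∈ s, (if t = u ∨ t = v then (0:ℝ) else 1)) = if u ∈ s ∨ v ∈ s then 0 else 1 := by
  by_cases h : u ∈ s ∨ v ∈ s
  · rw [if_pos h]
    rcases h with h | h
    · exact Finset.prod_eq_zero h (by simp)
    · exact Finset.prod_eq_zero h (by simp)
  · push_neg at h
    rw [if_neg (by push_neg; exact h)]
    apply Finset.prod_eq_one
    intro t ht
    rw [if_neg]
    rintro (rfl | rfl)
    · exact h.1 ht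
    · exact h.2 ht

lemma wgt_mom1 (T : Finset V) (q : V → ℝ) {u : V} (hu : u ∈ T) :
    ∑ S ∈ T.powerset, ((∏ t ∈ S, q t) * ∏ t ∈ T \ S, (1 - q t)) *
      (if u ∈ S then (1:ℝ) else 0) = q u := by
  have key : ∀ S ∈ T.powerset,
      ((∏ t ∈ S, q t) * ∏ t ∈ T \ S, (1 - q t)) * (if u ∈ S then (1:ℝ) else 0)
      = (∏ t ∈ S, q t) * ∏ t ∈ T \ S, ((1 - q t) * (if t = u then 0 else 1)) := by
    intro S hS
    rw [Finset.mem_powerset] at hS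
    rw [Finset.prod_mul_distrib, ind_prod]
    by_cases h : u ∈ S
    · have h2 : u ∉ T \ S := by simp [h]
      simp only [if_pos h, if_neg h2]
      ring
    · have h2 : u ∈ T \ S := Finset.mem_sdiff.mpr ⟨hu, h⟩
      simp only [if_neg h, if_pos h2]
      ring
  rw [Finset.sum_congr rfl key, ← Finset.prod_add,
    ← Finset.mul_prod_erase T _ hu]
  have h1 : ∀ t ∈ T.erase u, q t + (1 - q t) * (if t = u then (0:ℝ) else 1) = 1 := by
    intro t ht
    rw [if_neg (Finset.ne_of_mem_erase ht)]
    ring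
  rw [Finset.prod_congr rfl h1, Finset.prod_const_one, if_pos rfl]
  ring

lemma wgt_mom2 (T : Finset V) (q : V → ℝ) {u v : V} (hu : u ∈ T) (hv : v ∈ T) (huv : u ≠ v) :
    ∑ S ∈ T.powerset, ((∏ t ∈ S, q t) * ∏ t ∈ T \ S, (1 - q t)) *
      (if u ∈ S ∧ v ∈ S then (1:ℝ) else 0) = q u * q v := by
  have key : ∀ S ∈ T.powerset,
      ((∏ t ∈ S, q t) * ∏ t ∈ T \ S, (1 - q t)) * (if u ∈ S ∧ v ∈ S then (1:ℝ) else 0)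
      = (∏ t ∈ S, q t) * ∏ t ∈ T \ S, ((1 - q t) * (if t = u ∨ t = v then 0 else 1)) := by
    intro S hS
    rw [Finset.mem_powerset] at hS
    rw [Finset.prod_mul_distrib, ind_prod2]
    by_cases h : u ∈ S ∧ v ∈ S
    · have h2 : ¬ (u ∈ T \ S ∨ v ∈ T \ S) := by simp [h.1, h.2]
      simp only [if_pos h, if_neg h2]
      ring
    · have h2 : u ∈ T \ S ∨ v ∈ T \ S := by
        by_contra hc
        push_neg at hc
        simp only [Finset.mem_sdiff] at hc
        exact h ⟨by_contra fun hus => (hc.1 ⟨hu, hus⟩), by_contra fun hvs => (hc.2 ⟨hv, hvs⟩)⟩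
      simp only [if_neg h, if_pos h2]
      ring
  rw [Finset.sum_congr rfl key, ← Finset.prod_add,
    ← Finset.mul_prod_erase T _ hu, ← Finset.mul_prod_erase (T.erase u) _ (Finset.mem_erase.mpr ⟨huv.symm, hv⟩)]
  have h1 : ∀ t ∈ (T.erase u).erase v, q t + (1 - q t) * (if t = u ∨ t = v then (0:ℝ) else 1) = 1 := by
    intro t ht
    have h2 := Finset.ne_of_mem_erase ht
    have h3 := Finset.ne_of_mem_erase (Finset.mem_of_mem_erase ht)
    rw [if_neg (by rintro (rfl | rfl) <;> simp_all)]
    ring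
  rw [Finset.prod_congr rfl h1, Finset.prod_const_one,
    if_pos (Or.inl rfl), if_pos (Or.inr rfl)]
  ring

variable (pos : V → V → Bool) (x : V → V → ℝ) (fp fm : ℝ → ℝ)

noncomputable def GG (u w : V) : ℝ := if pos u w then fp (x u w) else fm (x u w)

noncomputable def cE (w u v : V) : ℝ :=
  if pos u v then GG pos x fp fm u w + GG pos x fp fm v w
      - 2 * GG pos x fp fm u w * GG pos x fp fm v w
  else (1 - GG pos x fp fm u w) * (1 - GG pos x fp fm v w)

noncomputable def lE (w u v : V) : ℝ :=
  (if pos u v then x u v else 1 - x u v) * (1 - GG pos x fp fm u w * GG pos x fp fm v w)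

variable (hsym : ∀ u v, pos u v = pos v u) (hxsym : ∀ u v, x u v = x v u)
  (hxdiag : ∀ u, x u u = 0) (hfp0 : fp 0 = 0) (hfm0 : fm 0 = 0)
  (hxb : ∀ u v, 0 ≤ x u v ∧ x u v ≤ 1) (hxtri : ∀ u v w, x u w ≤ x u v + x v w)
  (hfp : ∀ t ∈ Set.Icc (0:ℝ) 1, fp t ∈ Set.Icc (0:ℝ) 1)
  (hfm : ∀ t ∈ Set.Icc (0:ℝ) 1, fm t ∈ Set.Icc (0:ℝ) 1)

include hsym hxsym in
lemma hq : ∀ t w : V, joinProb pos x fp fm w t = 1 - GG pos x fp fm t w := by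
  intro t w
  unfold joinProb GG
  rw [hsym w t, hxsym w t]

include hxdiag hfp0 hfm0 in
lemma GG_diag : ∀ u : V, GG pos x fp fm u u = 0 := by
  intro u
  unfold GG
  rw [hxdiag u, hfp0, hfm0]
  simp

include hsym hxsym in
lemma GG_symm : ∀ u w : V, GG pos x fp fm u w = GG pos x fp fm w u := by
  intro u w
  unfold GG
  rw [hsym u w, hxsym u w]

include hsym hxsym hxdiag hfp0 hfm0 in
lemma exp_alg_edge (A : Finset V) {w u v : V} (hw : w ∈ A) (hu : u ∈ A) (hv : v ∈ A)
    (huv : u ≠ v) :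
    ∑ S ∈ (A.erase w).powerset, clusterProb pos x fp fm A w S *
      (if (if pos u v then ((u ∈ insert w S ∧ v ∉ insert w S) ∨ (u ∉ insert w S ∧ v ∈ insert w S))
        else (u ∈ insert w S ∧ v ∈ insert w S)) then (1:ℝ) else 0)
    = cE pos x fp fm w u v := by
  set T := A.erase w with hT
  set q := joinProb pos x fp fm w with hqdef
  have hcp : ∀ S, clusterProb pos x fp fm A w S
      = (∏ t ∈ S, q t) * ∏ t ∈ T \ S, (1 - q t) := fun S => rfl
  by_cases hwu : w = u
  · -- pivot = u
    subst hwu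
    have hvT : v ∈ T := Finset.mem_erase.mpr ⟨huv.symm, hv⟩
    by_cases hp : pos w v
    · have key : ∀ S ∈ T.powerset, clusterProb pos x fp fm A w S *
          (if (if pos w v then ((w ∈ insert w S ∧ v ∉ insert w S) ∨ (w ∉ insert w S ∧ v ∈ insert w S))
            else (w ∈ insert w S ∧ v ∈ insert w S)) then (1:ℝ) else 0)
          = ((∏ t ∈ S, q t) * ∏ t ∈ T \ S, (1 - q t))
            - ((∏ t ∈ S, q t) * ∏ t ∈ T \ S, (1 - q t)) * (if v ∈ S then (1:ℝ) else 0) := by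
        intro S hS
        rw [hcp]
        have hvw : v ≠ w := huv.symm
        by_cases h : v ∈ S <;>
          simp [hp, h, hvw, Finset.mem_insert]
      rw [Finset.sum_congr rfl key, Finset.sum_sub_distrib, wgt_total, wgt_mom1 T q hvT,
        hqdef, hq pos x fp fm hsym hxsym]
      unfold cE
      rw [if_pos hp, GG_diag pos x fp fm hxdiag hfp0 hfm0]
      ring
    · have key : ∀ S ∈ T.powerset, clusterProb pos x fp fm A w S *
          (if (if pos w v then ((w ∈ insert w S ∧ v ∉ insert w S) ∨ (w ∉ insert w S ∧ v ∈ insert w S))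
            else (w ∈ insert w S ∧ v ∈ insert w S)) then (1:ℝ) else 0)
          = ((∏ t ∈ S, q t) * ∏ t ∈ T \ S, (1 - q t)) * (if v ∈ S then (1:ℝ) else 0) := by
        intro S hS
        rw [hcp]
        have hvw : v ≠ w := huv.symm
        by_cases h : v ∈ S <;> simp [hp, h, hvw, Finset.mem_insert]
      rw [Finset.sum_congr rfl key, wgt_mom1 T q hvT, hqdef, hq pos x fp fm hsym hxsym]
      unfold cE
      rw [if_neg hp, GG_diag pos x fp fm hxdiag hfp0 hfm0]
      ring
  · by_cases hwv : w = v
    · subst hwv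
      have huT : u ∈ T := Finset.mem_erase.mpr ⟨fun h => hwu h.symm, hu⟩
      by_cases hp : pos u w
      · have key : ∀ S ∈ T.powerset, clusterProb pos x fp fm A w S *
            (if (if pos u w then ((u ∈ insert w S ∧ w ∉ insert w S) ∨ (u ∉ insert w S ∧ w ∈ insert w S))
              else (u ∈ insert w S ∧ w ∈ insert w S)) then (1:ℝ) else 0)
            = ((∏ t ∈ S, q t) * ∏ t ∈ T \ S, (1 - q t))
              - ((∏ t ∈ S, q t) * ∏ t ∈ T \ S, (1 - q t)) * (if u ∈ S then (1:ℝ) else 0) := by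
          intro S hS
          rw [hcp]
          have huw : u ≠ w := fun h => hwu h.symm
          by_cases h : u ∈ S <;> simp [hp, h, huw, Finset.mem_insert]
        rw [Finset.sum_congr rfl key, Finset.sum_sub_distrib, wgt_total, wgt_mom1 T q huT,
          hqdef, hq pos x fp fm hsym hxsym]
        unfold cE
        rw [if_pos hp, GG_diag pos x fp fm hxdiag hfp0 hfm0]
        ring
      · have key : ∀ S ∈ T.powerset, clusterProb pos x fp fm A w S *
            (if (if pos u w then ((u ∈ insert w S ∧ w ∉ insert w S) ∨ (u ∉ insert w S ∧ w ∈ insert w S))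
              else (u ∈ insert w S ∧ w ∈ insert w S)) then (1:ℝ) else 0)
            = ((∏ t ∈ S, q t) * ∏ t ∈ T \ S, (1 - q t)) * (if u ∈ S then (1:ℝ) else 0) := by
          intro S hS
          rw [hcp]
          have huw : u ≠ w := fun h => hwu h.symm
          by_cases h : u ∈ S <;> simp [hp, h, huw, Finset.mem_insert]
        rw [Finset.sum_congr rfl key, wgt_mom1 T q huT, hqdef, hq pos x fp fm hsym hxsym]
        unfold cE
        rw [if_neg hp, GG_diag pos x fp fm hxdiag hfp0 hfm0]
        ring
    · -- pivot distinct from u, v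
      have huT : u ∈ T := Finset.mem_erase.mpr ⟨fun h => hwu h.symm, hu⟩
      have hvT : v ∈ T := Finset.mem_erase.mpr ⟨fun h => hwv h.symm, hv⟩
      have huw : u ≠ w := fun h => hwu h.symm
      have hvw : v ≠ w := fun h => hwv h.symm
      by_cases hp : pos u v
      · have key : ∀ S ∈ T.powerset, clusterProb pos x fp fm A w S *
            (if (if pos u v then ((u ∈ insert w S ∧ v ∉ insert w S) ∨ (u ∉ insert w S ∧ v ∈ insert w S))
              else (u ∈ insert w S ∧ v ∈ insert w S)) then (1:ℝ) else 0)
            = (((∏ t ∈ S, q t) * ∏ t ∈ T \ S, (1 - q t)) * (if u ∈ S then (1:ℝ) else 0)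
              + ((∏ t ∈ S, q t) * ∏ t ∈ T \ S, (1 - q t)) * (if v ∈ S then (1:ℝ) else 0))
              - 2 * (((∏ t ∈ S, q t) * ∏ t ∈ T \ S, (1 - q t)) * (if u ∈ S ∧ v ∈ S then (1:ℝ) else 0)) := by
          intro S hS
          rw [hcp]
          by_cases h1 : u ∈ S <;> by_cases h2 : v ∈ S <;>
            simp [hp, h1, h2, huw, hvw, Finset.mem_insert] <;> ring
        rw [Finset.sum_congr rfl key, Finset.sum_sub_distrib, Finset.sum_add_distrib,
          ← Finset.mul_sum, wgt_mom1 T q huT, wgt_mom1 T q hvT, wgt_mom2 T q huT hvT huv,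
          hqdef, hq pos x fp fm hsym hxsym, hq pos x fp fm hsym hxsym]
        unfold cE
        rw [if_pos hp]
        ring
      · have key : ∀ S ∈ T.powerset, clusterProb pos x fp fm A w S *
            (if (if pos u v then ((u ∈ insert w S ∧ v ∉ insert w S) ∨ (u ∉ insert w S ∧ v ∈ insert w S))
              else (u ∈ insert w S ∧ v ∈ insert w S)) then (1:ℝ) else 0)
            = ((∏ t ∈ S, q t) * ∏ t ∈ T \ S, (1 - q t)) * (if u ∈ S ∧ v ∈ S then (1:ℝ) else 0) := by
          intro S hS
          rw [hcp]
          by_cases h1 : u ∈ S <;> by_cases h2 : v ∈ S <;>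
            simp [hp, h1, h2, huw, hvw, Finset.mem_insert]
        rw [Finset.sum_congr rfl key, wgt_mom2 T q huT hvT huv,
          hqdef, hq pos x fp fm hsym hxsym, hq pos x fp fm hsym hxsym]
        unfold cE
        rw [if_neg hp]

include hsym hxsym hxdiag hfp0 hfm0 in
lemma exp_lp_edge (A : Finset V) {w u v : V} (hw : w ∈ A) (hu : u ∈ A) (hv : v ∈ A)
    (huv : u ≠ v) :
    ∑ S ∈ (A.erase w).powerset, clusterProb pos x fp fm A w S *
      (if (u ∈ insert w S ∨ v ∈ insert w S) then (1:ℝ) else 0)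
    = 1 - GG pos x fp fm u w * GG pos x fp fm v w := by
  set T := A.erase w with hT
  set q := joinProb pos x fp fm w with hqdef
  have hcp : ∀ S, clusterProb pos x fp fm A w S
      = (∏ t ∈ S, q t) * ∏ t ∈ T \ S, (1 - q t) := fun S => rfl
  by_cases hwu : w = u
  · subst hwu
    have key : ∀ S ∈ T.powerset, clusterProb pos x fp fm A w S *
        (if (w ∈ insert w S ∨ v ∈ insert w S) then (1:ℝ) else 0)
        = (∏ t ∈ S, q t) * ∏ t ∈ T \ S, (1 - q t) := by
      intro S hS
      rw [hcp]
      simp [Finset.mem_insert]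
    rw [Finset.sum_congr rfl key, wgt_total, GG_diag pos x fp fm hxdiag hfp0 hfm0]
    ring
  · by_cases hwv : w = v
    · subst hwv
      have key : ∀ S ∈ T.powerset, clusterProb pos x fp fm A w S *
          (if (u ∈ insert w S ∨ w ∈ insert w S) then (1:ℝ) else 0)
          = (∏ t ∈ S, q t) * ∏ t ∈ T \ S, (1 - q t) := by
        intro S hS
        rw [hcp]
        simp [Finset.mem_insert]
      rw [Finset.sum_congr rfl key, wgt_total, GG_diag pos x fp fm hxdiag hfp0 hfm0]
      ring
    · have huT : u ∈ T := Finset.mem_erase.mpr ⟨fun h => hwu h.symm, hu⟩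
      have hvT : v ∈ T := Finset.mem_erase.mpr ⟨fun h => hwv h.symm, hv⟩
      have huw : u ≠ w := fun h => hwu h.symm
      have hvw : v ≠ w := fun h => hwv h.symm
      have key : ∀ S ∈ T.powerset, clusterProb pos x fp fm A w S *
          (if (u ∈ insert w S ∨ v ∈ insert w S) then (1:ℝ) else 0)
          = (((∏ t ∈ S, q t) * ∏ t ∈ T \ S, (1 - q t)) * (if u ∈ S then (1:ℝ) else 0)
            + ((∏ t ∈ S, q t) * ∏ t ∈ T \ S, (1 - q t)) * (if v ∈ S then (1:ℝ) else 0))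
            - ((∏ t ∈ S, q t) * ∏ t ∈ T \ S, (1 - q t)) * (if u ∈ S ∧ v ∈ S then (1:ℝ) else 0) := by
        intro S hS
        rw [hcp]
        by_cases h1 : u ∈ S <;> by_cases h2 : v ∈ S <;>
          simp [h1, h2, huw, hvw, Finset.mem_insert] <;> ring
      rw [Finset.sum_congr rfl key, Finset.sum_sub_distrib, Finset.sum_add_distrib,
        wgt_mom1 T q huT, wgt_mom1 T q hvT, wgt_mom2 T q huT hvT huv,
        hqdef, hq pos x fp fm hsym hxsym, hq pos x fp fm hsym hxsym]
      ring

include hsym hxsym hxdiag hfp0 hfm0 in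
lemma exp_alg (A : Finset V) {w : V} (hw : w ∈ A) :
    ∑ S ∈ (A.erase w).powerset, clusterProb pos x fp fm A w S * (algCount pos A (insert w S) : ℝ)
    = ∑ p ∈ univ.filter (fun p : V × V => p.1 ∈ A ∧ p.2 ∈ A ∧ p.1 < p.2),
        cE pos x fp fm w p.1 p.2 := by
  have hcount : ∀ C : Finset V, (algCount pos A C : ℝ)
      = ∑ p ∈ univ.filter (fun p : V × V => p.1 ∈ A ∧ p.2 ∈ A ∧ p.1 < p.2),
          (if (if pos p.1 p.2 then ((p.1 ∈ C ∧ p.2 ∉ C) ∨ (p.1 ∉ C ∧ p.2 ∈ C))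
            else (p.1 ∈ C ∧ p.2 ∈ C)) then (1:ℝ) else 0) := by
    intro C
    have h1 : (algCount pos A C : ℝ)
        = ∑ p ∈ (univ : Finset (V × V)), (if (p.1 ∈ A ∧ p.2 ∈ A ∧ p.1 < p.2 ∧
            (if pos p.1 p.2 then ((p.1 ∈ C ∧ p.2 ∉ C) ∨ (p.1 ∉ C ∧ p.2 ∈ C))
              else (p.1 ∈ C ∧ p.2 ∈ C))) then (1:ℝ) else 0) := by
      unfold algCount
      rw [Finset.card_filter]
      push_cast
      rfl
    rw [h1, Finset.sum_filter]
    apply Finset.sum_congr rfl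
    intro p _
    split_ifs <;> tauto
  rw [Finset.sum_congr rfl (fun S _ => by rw [hcount])]
  simp_rw [Finset.mul_sum]
  rw [Finset.sum_comm]
  apply Finset.sum_congr rfl
  intro p hp
  rw [Finset.mem_filter] at hp
  exact exp_alg_edge pos x fp fm hsym hxsym hxdiag hfp0 hfm0 A hw hp.2.1 hp.2.2.1
    (ne_of_lt hp.2.2.2)

include hsym hxsym hxdiag hfp0 hfm0 in
lemma exp_lp (A : Finset V) {w : V} (hw : w ∈ A) :
    ∑ S ∈ (A.erase w).powerset, clusterProb pos x fp fm A w S * lpWeight pos x A (insert w S)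
    = ∑ p ∈ univ.filter (fun p : V × V => p.1 ∈ A ∧ p.2 ∈ A ∧ p.1 < p.2),
        lE pos x fp fm w p.1 p.2 := by
  have hwt : ∀ C : Finset V, lpWeight pos x A C
      = ∑ p ∈ univ.filter (fun p : V × V => p.1 ∈ A ∧ p.2 ∈ A ∧ p.1 < p.2),
          (if pos p.1 p.2 then x p.1 p.2 else 1 - x p.1 p.2) *
            (if (p.1 ∈ C ∨ p.2 ∈ C) then (1:ℝ) else 0) := by
    intro C
    unfold lpWeight
    rw [Finset.sum_filter, Finset.sum_filter]
    apply Finset.sum_congr rfl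
    intro p _
    by_cases hm : p.1 ∈ C ∨ p.2 ∈ C
    · have h1 : (p.1 ∈ A ∧ p.2 ∈ A ∧ p.1 < p.2 ∧ (p.1 ∈ C ∨ p.2 ∈ C)) ↔
          (p.1 ∈ A ∧ p.2 ∈ A ∧ p.1 < p.2) := by tauto
      rw [if_congr h1 rfl rfl, if_pos hm, mul_one]
    · have h1 : ¬(p.1 ∈ A ∧ p.2 ∈ A ∧ p.1 < p.2 ∧ (p.1 ∈ C ∨ p.2 ∈ C)) := by tauto
      rw [if_neg h1]
      simp [hm]
  rw [Finset.sum_congr rfl (fun S _ => by rw [hwt])]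
  simp_rw [Finset.mul_sum]
  rw [Finset.sum_comm]
  apply Finset.sum_congr rfl
  intro p hp
  rw [Finset.mem_filter] at hp
  have h := exp_lp_edge pos x fp fm hsym hxsym hxdiag hfp0 hfm0 A hw hp.2.1 hp.2.2.1
    (ne_of_lt hp.2.2.2) (w := w)
  unfold lE
  rw [← h, Finset.mul_sum]
  apply Finset.sum_congr rfl
  intro S _
  ring


noncomputable def posd (pos : V → V → Bool) : V → V → Bool :=
  fun u v => if u = v then true else pos u v

noncomputable def cE2 (w u v : V) : ℝ :=
  if posd pos u v then GG pos x fp fm u w + GG pos x fp fm v w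
      - 2 * GG pos x fp fm u w * GG pos x fp fm v w
  else (1 - GG pos x fp fm u w) * (1 - GG pos x fp fm v w)

noncomputable def lE2 (w u v : V) : ℝ :=
  (if posd pos u v then x u v else 1 - x u v) * (1 - GG pos x fp fm u w * GG pos x fp fm v w)

include hxdiag hfp0 hfm0 in
lemma hGP : ∀ u w : V, (if posd pos u w then fp (x u w) else fm (x u w)) = GG pos x fp fm u w := by
  intro u w
  by_cases h : u = w
  · subst h
    rw [GG_diag pos x fp fm hxdiag hfp0 hfm0, hxdiag, hfp0, hfm0]
    simp
  · unfold posd GG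
    simp [h]

include hsym hxsym hxdiag hfp0 hfm0 in
lemma algsig_eq (u v w : V) :
    ALGsig fp fm (posd pos v w) (posd pos u w) (posd pos u v) (x v w) (x u w) (x u v)
    = cE2 pos x fp fm w u v + cE2 pos x fp fm v u w + cE2 pos x fp fm u v w := by
  have e1 := hGP pos x fp fm hxdiag hfp0 hfm0 u w
  have e2 := hGP pos x fp fm hxdiag hfp0 hfm0 u v
  have e3 := hGP pos x fp fm hxdiag hfp0 hfm0 v w
  have s1 : GG pos x fp fm w v = GG pos x fp fm v w := GG_symm pos x fp fm hsym hxsym w v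
  have s2 : GG pos x fp fm v u = GG pos x fp fm u v := GG_symm pos x fp fm hsym hxsym v u
  have s3 : GG pos x fp fm w u = GG pos x fp fm u w := GG_symm pos x fp fm hsym hxsym w u
  simp only [ALGsig, cE2]
  rw [e1, e2, e3, s1, s2, s3]

include hsym hxsym hxdiag hfp0 hfm0 in
lemma lpsig_eq (u v w : V) :
    LPsig fp fm (posd pos v w) (posd pos u w) (posd pos u v) (x v w) (x u w) (x u v)
    = lE2 pos x fp fm w u v + lE2 pos x fp fm v u w + lE2 pos x fp fm u v w := by
  have e1 := hGP pos x fp fm hxdiag hfp0 hfm0 u w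
  have e2 := hGP pos x fp fm hxdiag hfp0 hfm0 u v
  have e3 := hGP pos x fp fm hxdiag hfp0 hfm0 v w
  have s1 : GG pos x fp fm w v = GG pos x fp fm v w := GG_symm pos x fp fm hsym hxsym w v
  have s2 : GG pos x fp fm v u = GG pos x fp fm u v := GG_symm pos x fp fm hsym hxsym v u
  have s3 : GG pos x fp fm w u = GG pos x fp fm u w := GG_symm pos x fp fm hsym hxsym w u
  simp only [LPsig, lE2]
  rw [e1, e2, e3, s1, s2, s3]

include hsym in
lemma cE2_eq {u v : V} (huv : u ≠ v) (w : V) :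
    cE2 pos x fp fm w u v = cE pos x fp fm w u v := by
  unfold cE2 cE posd
  simp [huv]

include hsym in
lemma lE2_eq {u v : V} (huv : u ≠ v) (w : V) :
    lE2 pos x fp fm w u v = lE pos x fp fm w u v := by
  unfold lE2 lE posd
  simp [huv]

include hsym in
lemma cE_symm (w u v : V) : cE pos x fp fm w u v = cE pos x fp fm w v u := by
  unfold cE
  rw [hsym u v]
  by_cases h : pos v u
  · rw [if_pos h, if_pos h]; ring
  · rw [if_neg h, if_neg h]; ring

include hsym hxsym in
lemma lE_symm (w u v : V) : lE pos x fp fm w u v = lE pos x fp fm w v u := by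
  unfold lE
  rw [hsym u v, hxsym u v]
  by_cases h : pos v u
  · rw [if_pos h]; ring
  · rw [if_neg h]; ring


lemma sum_pairs (A : Finset V) (F : V → V → ℝ) :
    ∑ p ∈ univ.filter (fun p : V × V => p.1 ∈ A ∧ p.2 ∈ A ∧ p.1 < p.2), F p.1 p.2
    = ∑ u ∈ A, ∑ v ∈ A, if u < v then F u v else 0 := by
  rw [Finset.sum_finset_product' _ A (fun u => A.filter (fun v => u < v))
    (by intro p; simp [Finset.mem_filter])]
  exact Finset.sum_congr rfl fun u _ => Finset.sum_filter _ _

lemma cube_swap12 (A : Finset V) (F : V → V → V → ℝ) :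
    ∑ a ∈ A, ∑ b ∈ A, ∑ c ∈ A, F a b c = ∑ a ∈ A, ∑ b ∈ A, ∑ c ∈ A, F b a c :=
  Finset.sum_comm

lemma cube_swap23 (A : Finset V) (F : V → V → V → ℝ) :
    ∑ a ∈ A, ∑ b ∈ A, ∑ c ∈ A, F a b c = ∑ a ∈ A, ∑ b ∈ A, ∑ c ∈ A, F a c b :=
  Finset.sum_congr rfl fun _ _ => Finset.sum_comm

include hxb hfp hfm in
lemma GG_bounds (u w : V) : 0 ≤ GG pos x fp fm u w ∧ GG pos x fp fm u w ≤ 1 := by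
  unfold GG
  have h1 := (hxb u w).1
  have h2 := (hxb u w).2
  by_cases h : pos u w
  · rw [if_pos h]
    have := hfp (x u w) (Set.mem_Icc.mpr ⟨h1, h2⟩)
    exact ⟨(Set.mem_Icc.mp this).1, (Set.mem_Icc.mp this).2⟩
  · rw [if_neg h]
    have := hfm (x u w) (Set.mem_Icc.mpr ⟨h1, h2⟩)
    exact ⟨(Set.mem_Icc.mp this).1, (Set.mem_Icc.mp this).2⟩

include hxb hfp hfm in
lemma cE2_diag_nonneg (w u : V) : 0 ≤ cE2 pos x fp fm w u u := by
  unfold cE2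
  have hb := GG_bounds pos x fp fm hxb hfp hfm u w
  have ht : posd pos u u = true := by unfold posd; simp
  rw [ht]
  simp only [if_true]
  nlinarith [hb.1, hb.2]

include hxdiag in
lemma lE2_diag (w u : V) : lE2 pos x fp fm w u u = 0 := by
  unfold lE2
  have ht : posd pos u u = true := by unfold posd; simp
  rw [ht]
  simp only [if_true]
  rw [hxdiag]
  ring

include hsym hxsym hxdiag hxb hxtri hfp0 hfm0 hfp hfm in
lemma main_sum_ineq (ρ : ℝ)
    (hmain : ∀ (s1 s2 s3 : Bool) (a b c : ℝ),
      a ∈ Set.Icc (0:ℝ) 1 → b ∈ Set.Icc (0:ℝ) 1 → c ∈ Set.Icc (0:ℝ) 1 →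
      a ≤ b + c → b ≤ a + c → c ≤ a + b →
      ALGsig fp fm s1 s2 s3 a b c ≤ ρ * LPsig fp fm s1 s2 s3 a b c)
    (A : Finset V) :
    ∑ w ∈ A, ∑ p ∈ univ.filter (fun p : V × V => p.1 ∈ A ∧ p.2 ∈ A ∧ p.1 < p.2),
        cE pos x fp fm w p.1 p.2
    ≤ ρ * ∑ w ∈ A, ∑ p ∈ univ.filter (fun p : V × V => p.1 ∈ A ∧ p.2 ∈ A ∧ p.1 < p.2),
        lE pos x fp fm w p.1 p.2 := by
  -- pointwise triangle inequality
  have tri : ∀ u v w : V,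
      cE2 pos x fp fm w u v + cE2 pos x fp fm v u w + cE2 pos x fp fm u v w
      ≤ ρ * (lE2 pos x fp fm w u v + lE2 pos x fp fm v u w + lE2 pos x fp fm u v w) := by
    intro u v w
    have t1 : x v w ≤ x u w + x u v := by
      have h := hxtri v u w
      rw [hxsym v u] at h
      linarith
    have t2 : x u w ≤ x v w + x u v := by
      have h := hxtri u v w
      linarith
    have t3 : x u v ≤ x v w + x u w := by
      have h := hxtri u w v
      rw [hxsym w v] at h
      linarith
    have h := hmain (posd pos v w) (posd pos u w) (posd pos u v) (x v w) (x u w) (x u v)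
      (Set.mem_Icc.mpr ⟨(hxb v w).1, (hxb v w).2⟩)
      (Set.mem_Icc.mpr ⟨(hxb u w).1, (hxb u w).2⟩)
      (Set.mem_Icc.mpr ⟨(hxb u v).1, (hxb u v).2⟩)
      t1 t2 t3
    rwa [algsig_eq pos x fp fm hsym hxsym hxdiag hfp0 hfm0,
      lpsig_eq pos x fp fm hsym hxsym hxdiag hfp0 hfm0] at h
  -- cube sums
  set Kc := ∑ w ∈ A, ∑ u ∈ A, ∑ v ∈ A, cE2 pos x fp fm w u v with hKc
  set Kl := ∑ w ∈ A, ∑ u ∈ A, ∑ v ∈ A, lE2 pos x fp fm w u v with hKl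
  have hKcKl : Kc ≤ ρ * Kl := by
    have hsum : ∑ w ∈ A, ∑ u ∈ A, ∑ v ∈ A,
        (cE2 pos x fp fm w u v + cE2 pos x fp fm v u w + cE2 pos x fp fm u v w)
        ≤ ρ * ∑ w ∈ A, ∑ u ∈ A, ∑ v ∈ A,
        (lE2 pos x fp fm w u v + lE2 pos x fp fm v u w + lE2 pos x fp fm u v w) := by
      rw [Finset.mul_sum]
      apply Finset.sum_le_sum
      intro w _
      rw [Finset.mul_sum]
      apply Finset.sum_le_sum
      intro u _
      rw [Finset.mul_sum]
      apply Finset.sum_le_sum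
      intro v _
      exact tri u v w
    have dc2 : ∑ w ∈ A, ∑ u ∈ A, ∑ v ∈ A, cE2 pos x fp fm v u w = Kc := by
      calc ∑ w ∈ A, ∑ u ∈ A, ∑ v ∈ A, cE2 pos x fp fm v u w
          = ∑ u ∈ A, ∑ w ∈ A, ∑ v ∈ A, cE2 pos x fp fm v u w := Finset.sum_comm
        _ = ∑ u ∈ A, ∑ v ∈ A, ∑ w ∈ A, cE2 pos x fp fm v u w :=
            Finset.sum_congr rfl fun _ _ => Finset.sum_comm
        _ = ∑ v ∈ A, ∑ u ∈ A, ∑ w ∈ A, cE2 pos x fp fm v u w := Finset.sum_comm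
        _ = Kc := rfl
    have dc3 : ∑ w ∈ A, ∑ u ∈ A, ∑ v ∈ A, cE2 pos x fp fm u v w = Kc := by
      calc ∑ w ∈ A, ∑ u ∈ A, ∑ v ∈ A, cE2 pos x fp fm u v w
          = ∑ u ∈ A, ∑ w ∈ A, ∑ v ∈ A, cE2 pos x fp fm u v w := Finset.sum_comm
        _ = ∑ u ∈ A, ∑ v ∈ A, ∑ w ∈ A, cE2 pos x fp fm u v w :=
            Finset.sum_congr rfl fun _ _ => Finset.sum_comm
        _ = Kc := rfl
    have dl2 : ∑ w ∈ A, ∑ u ∈ A, ∑ v ∈ A, lE2 pos x fp fm v u w = Kl := by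
      calc ∑ w ∈ A, ∑ u ∈ A, ∑ v ∈ A, lE2 pos x fp fm v u w
          = ∑ u ∈ A, ∑ w ∈ A, ∑ v ∈ A, lE2 pos x fp fm v u w := Finset.sum_comm
        _ = ∑ u ∈ A, ∑ v ∈ A, ∑ w ∈ A, lE2 pos x fp fm v u w :=
            Finset.sum_congr rfl fun _ _ => Finset.sum_comm
        _ = ∑ v ∈ A, ∑ u ∈ A, ∑ w ∈ A, lE2 pos x fp fm v u w := Finset.sum_comm
        _ = Kl := rfl
    have dl3 : ∑ w ∈ A, ∑ u ∈ A, ∑ v ∈ A, lE2 pos x fp fm u v w = Kl := by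
      calc ∑ w ∈ A, ∑ u ∈ A, ∑ v ∈ A, lE2 pos x fp fm u v w
          = ∑ u ∈ A, ∑ w ∈ A, ∑ v ∈ A, lE2 pos x fp fm u v w := Finset.sum_comm
        _ = ∑ u ∈ A, ∑ v ∈ A, ∑ w ∈ A, lE2 pos x fp fm u v w :=
            Finset.sum_congr rfl fun _ _ => Finset.sum_comm
        _ = Kl := rfl
    simp only [Finset.sum_add_distrib] at hsum
    rw [dc2, dc3, dl2, dl3] at hsum
    linarith
  -- decompose Kc, Kl
  have hdecC : ∀ w ∈ A, ∑ u ∈ A, ∑ v ∈ A, cE2 pos x fp fm w u v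
      = 2 * (∑ u ∈ A, ∑ v ∈ A, if u < v then cE pos x fp fm w u v else 0)
        + ∑ u ∈ A, cE2 pos x fp fm w u u := by
    intro w _
    have point : ∀ u v : V, cE2 pos x fp fm w u v
        = (if u < v then cE pos x fp fm w u v else 0)
          + (if v < u then cE pos x fp fm w u v else 0)
          + (if u = v then cE2 pos x fp fm w u v else 0) := by
      intro u v
      rcases lt_trichotomy u v with h | h | h
      · rw [if_pos h, if_neg (asymm h), if_neg (ne_of_lt h),
          cE2_eq pos x fp fm hsym (ne_of_lt h)]
        ring
      · rw [if_neg (by rw [h]; exact lt_irrefl v), if_neg (by rw [h]; exact lt_irrefl v),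
          if_pos h]
        ring
      · rw [if_neg (asymm h), if_pos h, if_neg (ne_of_gt h),
          cE2_eq pos x fp fm hsym (ne_of_gt h)]
        ring
    calc ∑ u ∈ A, ∑ v ∈ A, cE2 pos x fp fm w u v
        = ∑ u ∈ A, ∑ v ∈ A, ((if u < v then cE pos x fp fm w u v else 0)
          + (if v < u then cE pos x fp fm w u v else 0)
          + (if u = v then cE2 pos x fp fm w u v else 0)) := by
          exact Finset.sum_congr rfl fun u _ => Finset.sum_congr rfl fun v _ => point u v
      _ = (∑ u ∈ A, ∑ v ∈ A, if u < v then cE pos x fp fm w u v else 0)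
          + (∑ u ∈ A, ∑ v ∈ A, if v < u then cE pos x fp fm w u v else 0)
          + (∑ u ∈ A, ∑ v ∈ A, if u = v then cE2 pos x fp fm w u v else 0) := by
          simp only [Finset.sum_add_distrib]
      _ = 2 * (∑ u ∈ A, ∑ v ∈ A, if u < v then cE pos x fp fm w u v else 0)
          + ∑ u ∈ A, cE2 pos x fp fm w u u := by
          have e1 : (∑ u ∈ A, ∑ v ∈ A, if v < u then cE pos x fp fm w u v else 0)
              = ∑ u ∈ A, ∑ v ∈ A, if u < v then cE pos x fp fm w u v else 0 := by
            rw [Finset.sum_comm]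
            exact Finset.sum_congr rfl fun u _ => Finset.sum_congr rfl fun v _ => by
              by_cases h : u < v
              · rw [if_pos h, if_pos h, cE_symm pos x fp fm hsym]
              · rw [if_neg h, if_neg h]
          have e2 : (∑ u ∈ A, ∑ v ∈ A, if u = v then cE2 pos x fp fm w u v else 0)
              = ∑ u ∈ A, cE2 pos x fp fm w u u := by
            apply Finset.sum_congr rfl
            intro u hu
            rw [Finset.sum_ite_eq A u (fun v => cE2 pos x fp fm w u v), if_pos hu]
          rw [e1, e2]
          ring
  have hdecL : ∀ w ∈ A, ∑ u ∈ A, ∑ v ∈ A, lE2 pos x fp fm w u v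
      = 2 * (∑ u ∈ A, ∑ v ∈ A, if u < v then lE pos x fp fm w u v else 0) := by
    intro w _
    have point : ∀ u v : V, lE2 pos x fp fm w u v
        = (if u < v then lE pos x fp fm w u v else 0)
          + (if v < u then lE pos x fp fm w u v else 0)
          + (if u = v then lE2 pos x fp fm w u v else 0) := by
      intro u v
      rcases lt_trichotomy u v with h | h | h
      · rw [if_pos h, if_neg (asymm h), if_neg (ne_of_lt h),
          lE2_eq pos x fp fm hsym (ne_of_lt h)]
        ring
      · rw [if_neg (by rw [h]; exact lt_irrefl v), if_neg (by rw [h]; exact lt_irrefl v),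
          if_pos h]
        ring
      · rw [if_neg (asymm h), if_pos h, if_neg (ne_of_gt h),
          lE2_eq pos x fp fm hsym (ne_of_gt h)]
        ring
    calc ∑ u ∈ A, ∑ v ∈ A, lE2 pos x fp fm w u v
        = ∑ u ∈ A, ∑ v ∈ A, ((if u < v then lE pos x fp fm w u v else 0)
          + (if v < u then lE pos x fp fm w u v else 0)
          + (if u = v then lE2 pos x fp fm w u v else 0)) := by
          exact Finset.sum_congr rfl fun u _ => Finset.sum_congr rfl fun v _ => point u v
      _ = (∑ u ∈ A, ∑ v ∈ A, if u < v then lE pos x fp fm w u v else 0)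
          + (∑ u ∈ A, ∑ v ∈ A, if v < u then lE pos x fp fm w u v else 0)
          + (∑ u ∈ A, ∑ v ∈ A, if u = v then lE2 pos x fp fm w u v else 0) := by
          simp only [Finset.sum_add_distrib]
      _ = 2 * (∑ u ∈ A, ∑ v ∈ A, if u < v then lE pos x fp fm w u v else 0) := by
          have e1 : (∑ u ∈ A, ∑ v ∈ A, if v < u then lE pos x fp fm w u v else 0)
              = ∑ u ∈ A, ∑ v ∈ A, if u < v then lE pos x fp fm w u v else 0 := by
            rw [Finset.sum_comm]
            exact Finset.sum_congr rfl fun u _ => Finset.sum_congr rfl fun v _ => by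
              by_cases h : u < v
              · rw [if_pos h, if_pos h, lE_symm pos x fp fm hsym hxsym]
              · rw [if_neg h, if_neg h]
          have e2 : (∑ u ∈ A, ∑ v ∈ A, if u = v then lE2 pos x fp fm w u v else 0)
              = 0 := by
            apply Finset.sum_eq_zero
            intro u hu
            rw [Finset.sum_ite_eq A u (fun v => lE2 pos x fp fm w u v), if_pos hu,
              lE2_diag pos x fp fm hxdiag]
          rw [e1, e2]
          ring
  -- assemble
  set C := ∑ w ∈ A, ∑ p ∈ univ.filter (fun p : V × V => p.1 ∈ A ∧ p.2 ∈ A ∧ p.1 < p.2),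
      cE pos x fp fm w p.1 p.2 with hC
  set L := ∑ w ∈ A, ∑ p ∈ univ.filter (fun p : V × V => p.1 ∈ A ∧ p.2 ∈ A ∧ p.1 < p.2),
      lE pos x fp fm w p.1 p.2 with hL
  have hCeq : Kc = 2 * C + ∑ w ∈ A, ∑ u ∈ A, cE2 pos x fp fm w u u := by
    rw [hKc, hC, Finset.sum_congr rfl hdecC]
    rw [Finset.sum_add_distrib, ← Finset.mul_sum]
    congr 1
    congr 1
    exact Finset.sum_congr rfl fun w _ => (sum_pairs A (cE pos x fp fm w)).symm
  have hLeq : Kl = 2 * L := by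
    rw [hKl, hL, Finset.sum_congr rfl hdecL, ← Finset.mul_sum]
    congr 1
    exact Finset.sum_congr rfl fun w _ => (sum_pairs A (lE pos x fp fm w)).symm
  have hJ : 0 ≤ ∑ w ∈ A, ∑ u ∈ A, cE2 pos x fp fm w u u := by
    apply Finset.sum_nonneg
    intro w _
    apply Finset.sum_nonneg
    intro u _
    exact cE2_diag_nonneg pos x fp fm hxb hfp hfm w u
  rw [hCeq, hLeq] at hKcKl
  linarith

end StepAux

/-- If `ALG^σ(x,y,z) ≤ ρ·LP^σ(x,y,z)` for all signatures `σ` and all edge lengths in `[0,1]`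
satisfying the triangle inequality, and `f⁺(0) = f⁻(0) = 0`, then at each step of the
pivot-based LP rounding algorithm (with active set `A = V_t`),
`E[ALG_t | V_t] ≤ ρ·E[LP_t | V_t]`. -/
theorem step_alg_le_rho_lp {V : Type*} [Fintype V] [LinearOrder V]
    (pos : V → V → Bool) (hsym : ∀ u v, pos u v = pos v u)
    (x : V → V → ℝ) (hxsym : ∀ u v, x u v = x v u) (hxdiag : ∀ u, x u u = 0)
    (hxb : ∀ u v, 0 ≤ x u v ∧ x u v ≤ 1) (hxtri : ∀ u v w, x u w ≤ x u v + x v w)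
    (fp fm : ℝ → ℝ) (hfp0 : fp 0 = 0) (hfm0 : fm 0 = 0)
    (hfp : ∀ t ∈ Set.Icc (0:ℝ) 1, fp t ∈ Set.Icc (0:ℝ) 1)
    (hfm : ∀ t ∈ Set.Icc (0:ℝ) 1, fm t ∈ Set.Icc (0:ℝ) 1)
    (ρ : ℝ)
    (hmain : ∀ (s1 s2 s3 : Bool) (a b c : ℝ),
      a ∈ Set.Icc (0:ℝ) 1 → b ∈ Set.Icc (0:ℝ) 1 → c ∈ Set.Icc (0:ℝ) 1 →
      a ≤ b + c → b ≤ a + c → c ≤ a + b →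
      ALGsig fp fm s1 s2 s3 a b c ≤ ρ * LPsig fp fm s1 s2 s3 a b c)
    (A : Finset V) :
    expALG pos x fp fm A ≤ ρ * expLP pos x fp fm A := by
  have hAlg : expALG pos x fp fm A = ((A.card : ℝ))⁻¹ *
      ∑ w ∈ A, ∑ p ∈ Finset.univ.filter (fun p : V × V => p.1 ∈ A ∧ p.2 ∈ A ∧ p.1 < p.2),
        cE pos x fp fm w p.1 p.2 := by
    unfold expALG
    congr 1
    exact Finset.sum_congr rfl fun w hw =>
      exp_alg pos x fp fm hsym hxsym hxdiag hfp0 hfm0 A hw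
  have hLp : expLP pos x fp fm A = ((A.card : ℝ))⁻¹ *
      ∑ w ∈ A, ∑ p ∈ Finset.univ.filter (fun p : V × V => p.1 ∈ A ∧ p.2 ∈ A ∧ p.1 < p.2),
        lE pos x fp fm w p.1 p.2 := by
    unfold expLP
    congr 1
    exact Finset.sum_congr rfl fun w hw =>
      exp_lp pos x fp fm hsym hxsym hxdiag hfp0 hfm0 A hw
  rw [hAlg, hLp]
  have h := main_sum_ineq pos x fp fm hsym hxsym hxdiag hfp0 hfm0 hxb hxtri hfp hfm ρ hmain A
  have hinv : (0:ℝ) ≤ ((A.card : ℝ))⁻¹ := by positivity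
  calc ((A.card : ℝ))⁻¹ * ∑ w ∈ A, ∑ p ∈ Finset.univ.filter
          (fun p : V × V => p.1 ∈ A ∧ p.2 ∈ A ∧ p.1 < p.2), cE pos x fp fm w p.1 p.2
      ≤ ((A.card : ℝ))⁻¹ * (ρ * ∑ w ∈ A, ∑ p ∈ Finset.univ.filter
          (fun p : V × V => p.1 ∈ A ∧ p.2 ∈ A ∧ p.1 < p.2), lE pos x fp fm w p.1 p.2) :=
        mul_le_mul_of_nonneg_left h hinv
    _ = ρ * (((A.card : ℝ))⁻¹ * ∑ w ∈ A, ∑ p ∈ Finset.univ.filter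
          (fun p : V × V => p.1 ∈ A ∧ p.2 ∈ A ∧ p.1 < p.2), lE pos x fp fm w p.1 p.2) := by
        ring
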